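/- For N = 1: 1/2 + ∑_{n=1}^∞ ∏_{k=0}^{1} sinc(n/(2k+1)) = ∫_0^∞ ∏_{k=0}^{1} sinc(x/(2k+1)) dx, i.e., 1/2 + ∑_{n=1}^∞ sinc(n)·sinc(n/3) = ∫_0^∞ sinc(x)·sinc(x/3) dx. -/

import Mathlib

open MeasureTheory Real

/-- sinc x = sin x / x for x ≠ 0, sinc 0 = 1. -/
noncomputable def sinc (x : ℝ) : ℝ := if x = 0 then 1 else Real.sin x / x

section helpers
open Set Filter Topology

lemma tendsto_exp_neg_mul {c : ℝ} (hc : 0 < c) :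
    Tendsto (fun x : ℝ => exp (-(c*x))) atTop (𝓝 0) := by
  have h1 : Tendsto (fun x : ℝ => c * x) atTop atTop := tendsto_id.const_mul_atTop hc
  exact (tendsto_exp_neg_atTop_nhds_zero.comp h1).congr fun x => rfl

lemma tendsto_mul_exp_neg_mul {c : ℝ} (hc : 0 < c) :
    Tendsto (fun x : ℝ => x * exp (-(c*x))) atTop (𝓝 0) := by
  have := tendsto_rpow_mul_exp_neg_mul_atTop_nhds_zero 1 c hc
  simpa [Real.rpow_one, neg_mul] using this

lemma intA_integrable {x : ℝ} (hx : 0 < x) :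
    IntegrableOn (fun t : ℝ => t * exp (-(x*t))) (Ioi 0) := by
  apply integrable_of_isBigO_exp_neg (half_pos hx) (by fun_prop)
  have hlo : (fun t : ℝ => t * exp (-(x*t))) =o[atTop] fun t => exp (-(x/2)*t) := by
    rw [Asymptotics.isLittleO_iff_tendsto fun s h => absurd h (Real.exp_pos _).ne']
    refine (tendsto_mul_exp_neg_mul (half_pos hx)).congr fun s => ?_
    rw [mul_div_assoc, ← Real.exp_sub]
    congr 1
    ring
  exact hlo.isBigO

lemma intA_value {x : ℝ} (hx : 0 < x) :
    ∫ t in Ioi (0:ℝ), t * exp (-(x*t)) = 1/x^2 := by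
  have he : ∀ t : ℝ, HasDerivAt (fun t => exp (-(x*t))) (exp (-(x*t)) * -x) t := by
    intro t
    simpa using (((hasDerivAt_id t).const_mul x).neg).exp
  have hF : ∀ t : ℝ, HasDerivAt (fun t => -(exp (-(x*t)) * (t/x + 1/x^2)))
      (t * exp (-(x*t))) t := by
    intro t
    have h0 : HasDerivAt (fun t : ℝ => t/x) (1/x) t := by
      simpa using (hasDerivAt_id t).div_const x
    have h1 : HasDerivAt (fun t : ℝ => t/x + 1/x^2) (1/x) t := h0.add_const _
    have := ((he t).fun_mul h1).fun_neg
    refine this.congr_deriv ?_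
    field_simp [hx.ne']
    ring
  have hlim : Tendsto (fun t => -(exp (-(x*t)) * (t/x + 1/x^2))) atTop (𝓝 0) := by
    have h1 := ((tendsto_mul_exp_neg_mul hx).div_const x)
    have h2 := (tendsto_exp_neg_mul hx).mul_const (1/x^2)
    have := (h1.add h2).neg
    simp only [zero_div, zero_mul, add_zero, neg_zero, zero_add] at this
    refine this.congr fun t => ?_
    ring
  have := integral_Ioi_of_hasDerivAt_of_tendsto' (fun t _ => hF t)
    (intA_integrable hx) hlim
  rw [this]
  simp

lemma intB_integrable {t : ℝ} (ht : 0 < t) :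
    IntegrableOn (fun x : ℝ => (1 - cos x) * exp (-(t*x))) (Ioi 0) := by
  apply integrable_of_isBigO_exp_neg ht (by fun_prop)
  rw [Asymptotics.isBigO_iff]
  refine ⟨2, Eventually.of_forall fun x => ?_⟩
  rw [norm_mul, Real.norm_eq_abs, Real.norm_eq_abs, Real.norm_eq_abs, abs_exp, abs_exp,
    ← neg_mul]
  have : |1 - cos x| ≤ 2 := by
    have := Real.neg_one_le_cos x
    have := Real.cos_le_one x
    rw [abs_le]; constructor <;> linarith
  nlinarith [Real.exp_pos (-t*x), abs_nonneg (1 - cos x)]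

lemma intB_value {t : ℝ} (ht : 0 < t) :
    ∫ x in Ioi (0:ℝ), (1 - cos x) * exp (-(t*x)) = 1/t - t/(1+t^2) := by
  have h1t : (1:ℝ) + t^2 ≠ 0 := by positivity
  have he : ∀ x : ℝ, HasDerivAt (fun x => exp (-(t*x))) (exp (-(t*x)) * -t) x := by
    intro x
    simpa using (((hasDerivAt_id x).const_mul t).neg).exp
  have hF : ∀ x : ℝ, HasDerivAt
      (fun x => -(exp (-(t*x))/t) + exp (-(t*x)) * (t * cos x - sin x)/(1+t^2))
      ((1 - cos x) * exp (-(t*x))) x := by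
    intro x
    have htrig : HasDerivAt (fun x => t * cos x - sin x) (t * (-sin x) - cos x) x :=
      ((Real.hasDerivAt_cos x).const_mul t).sub (Real.hasDerivAt_sin x)
    have := (((he x).div_const t).fun_neg).fun_add (((he x).fun_mul htrig).div_const (1+t^2))
    refine this.congr_deriv ?_
    field_simp [ht.ne']
    ring
  have hlim : Tendsto
      (fun x => -(exp (-(t*x))/t) + exp (-(t*x)) * (t * cos x - sin x)/(1+t^2))
      atTop (𝓝 0) := by
    have h1 : Tendsto (fun x => -(exp (-(t*x))/t)) atTop (𝓝 0) := by
      simpa using ((tendsto_exp_neg_mul ht).div_const t).neg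
    have h2 : Tendsto (fun x => exp (-(t*x)) * (t * cos x - sin x)/(1+t^2)) atTop (𝓝 0) := by
      apply squeeze_zero_norm (a := fun x => exp (-(t*x)) * ((t+1)/(1+t^2)))
      · intro x
        have hb : |t * cos x - sin x| ≤ t + 1 := by
          have h1 : |t * cos x| ≤ t := by
            rw [abs_mul, abs_of_pos ht]
            calc t * |cos x| ≤ t * 1 := by
                  gcongr
                  exact Real.abs_cos_le_one x
              _ = t := mul_one t
          have h2 := Real.abs_sin_le_one x
          calc |t * cos x - sin x| ≤ |t * cos x| + |sin x| := abs_sub _ _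
            _ ≤ t + 1 := by linarith
        rw [Real.norm_eq_abs, abs_div, abs_mul, abs_exp,
          abs_of_pos (show (0:ℝ) < 1+t^2 by positivity), mul_div_assoc]
        gcongr
      · simpa using (tendsto_exp_neg_mul ht).mul_const ((t+1)/(1+t^2))
    simpa using h1.add h2
  have := integral_Ioi_of_hasDerivAt_of_tendsto' (fun x _ => hF x)
    (intB_integrable ht) hlim
  rw [this]
  simp [Real.cos_zero, Real.sin_zero]
  ring

open ENNReal in
lemma lint_eq :
    ∫⁻ x in Ioi (0:ℝ), ENNReal.ofReal ((1 - cos x)/x^2) = ENNReal.ofReal (π/2) := by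
  have hmeas : AEMeasurable (Function.uncurry fun x t : ℝ =>
      ENNReal.ofReal ((1 - cos x) * (t * exp (-(x*t)))))
      ((volume.restrict (Ioi (0:ℝ))).prod (volume.restrict (Ioi (0:ℝ)))) := by
    apply Measurable.aemeasurable
    apply ENNReal.measurable_ofReal.comp
    fun_prop
  have step1 : ∀ x ∈ Ioi (0:ℝ), ENNReal.ofReal ((1 - cos x)/x^2)
      = ∫⁻ t in Ioi (0:ℝ), ENNReal.ofReal ((1 - cos x) * (t * exp (-(x*t)))) := by
    intro x hx
    rw [mem_Ioi] at hx
    have hc : 0 ≤ 1 - cos x := by have := Real.cos_le_one x; linarith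
    calc ENNReal.ofReal ((1 - cos x)/x^2)
        = ENNReal.ofReal (1 - cos x) * ENNReal.ofReal (1/x^2) := by
          rw [← ENNReal.ofReal_mul hc]; ring_nf
      _ = ENNReal.ofReal (1 - cos x) * ∫⁻ t in Ioi (0:ℝ),
            ENNReal.ofReal (t * exp (-(x*t))) := by
          rw [← intA_value hx, ofReal_integral_eq_lintegral_ofReal (intA_integrable hx)]
          filter_upwards [ae_restrict_mem measurableSet_Ioi] with t ht
          have : (0:ℝ) < t := ht
          positivity
      _ = ∫⁻ t in Ioi (0:ℝ), ENNReal.ofReal ((1 - cos x) * (t * exp (-(x*t)))) := by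
          rw [← lintegral_const_mul' _ _ ENNReal.ofReal_ne_top]
          congr 1
          ext t
          rw [← ENNReal.ofReal_mul hc]
  have step3 : ∀ t ∈ Ioi (0:ℝ), (∫⁻ x in Ioi (0:ℝ),
      ENNReal.ofReal ((1 - cos x) * (t * exp (-(x*t)))))
      = ENNReal.ofReal (1/(1+t^2)) := by
    intro t ht
    rw [mem_Ioi] at ht
    calc (∫⁻ x in Ioi (0:ℝ), ENNReal.ofReal ((1 - cos x) * (t * exp (-(x*t)))))
        = ∫⁻ x in Ioi (0:ℝ), ENNReal.ofReal t * ENNReal.ofReal ((1 - cos x) * exp (-(t*x))) := by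
          congr 1
          ext x
          rw [← ENNReal.ofReal_mul ht.le]
          congr 1
          ring_nf
      _ = ENNReal.ofReal t * ENNReal.ofReal (1/t - t/(1+t^2)) := by
          rw [lintegral_const_mul' _ _ ENNReal.ofReal_ne_top, ← intB_value ht,
            ofReal_integral_eq_lintegral_ofReal (intB_integrable ht)]
          filter_upwards [ae_restrict_mem measurableSet_Ioi] with x hx
          have hc : 0 ≤ 1 - cos x := by have := Real.cos_le_one x; linarith
          positivity
      _ = ENNReal.ofReal (1/(1+t^2)) := by
          rw [← ENNReal.ofReal_mul ht.le]
          congr 1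
          field_simp
          ring
  calc ∫⁻ x in Ioi (0:ℝ), ENNReal.ofReal ((1 - cos x)/x^2)
      = ∫⁻ x in Ioi (0:ℝ), ∫⁻ t in Ioi (0:ℝ),
          ENNReal.ofReal ((1 - cos x) * (t * exp (-(x*t)))) :=
        setLIntegral_congr_fun measurableSet_Ioi step1
    _ = ∫⁻ t in Ioi (0:ℝ), ∫⁻ x in Ioi (0:ℝ),
          ENNReal.ofReal ((1 - cos x) * (t * exp (-(x*t)))) :=
        lintegral_lintegral_swap hmeas
    _ = ∫⁻ t in Ioi (0:ℝ), ENNReal.ofReal (1/(1+t^2)) :=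
        setLIntegral_congr_fun measurableSet_Ioi step3
    _ = ENNReal.ofReal (π/2) := by
        rw [← ofReal_integral_eq_lintegral_ofReal]
        · congr 1
          simp_rw [one_div]
          rw [integral_Ioi_inv_one_add_sq]
          simp
        · exact integrable_inv_one_add_sq.integrableOn.congr_fun
            (fun x _ => (one_div _).symm) measurableSet_Ioi
        · filter_upwards with t
          positivity

lemma g_int : IntegrableOn (fun x : ℝ => (1 - cos x)/x^2) (Ioi 0) := by
  constructor
  · apply Measurable.aestronglyMeasurable
    fun_prop
  · rw [hasFiniteIntegral_iff_ofReal]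
    · rw [lint_eq]
      exact ENNReal.ofReal_lt_top
    · filter_upwards [ae_restrict_mem measurableSet_Ioi] with x hx
      have hx' : (0:ℝ) < x := hx
      have := Real.cos_le_one x
      exact div_nonneg (by linarith) (by positivity)

lemma g_val : ∫ x in Ioi (0:ℝ), (1 - cos x)/x^2 = π/2 := by
  rw [integral_eq_lintegral_of_nonneg_ae, lint_eq, ENNReal.toReal_ofReal (by positivity)]
  · filter_upwards [ae_restrict_mem measurableSet_Ioi] with x hx
    have hx' : (0:ℝ) < x := hx
    have := Real.cos_le_one x
    exact div_nonneg (by linarith) (by positivity)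
  · apply Measurable.aestronglyMeasurable
    fun_prop

lemma gc_int {c : ℝ} (hc : 0 < c) :
    IntegrableOn (fun x : ℝ => (1 - cos (c*x))/x^2) (Ioi 0) := by
  have h1 : IntegrableOn (fun x : ℝ => (1 - cos (c*x))/(c*x)^2) (Ioi 0) := by
    have := (integrableOn_Ioi_comp_mul_left_iff (fun y : ℝ => (1 - cos y)/y^2) 0 hc).2
    simpa using this (by simpa using g_int)
  have h2 : IntegrableOn (fun x : ℝ => c^2 * ((1 - cos (c*x))/(c*x)^2)) (Ioi 0) :=
    h1.const_mul (c^2)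
  refine IntegrableOn.congr_fun h2 (fun x hx => ?_) measurableSet_Ioi
  have hx' : (0:ℝ) < x := hx
  field_simp

lemma gc_val {c : ℝ} (hc : 0 < c) :
    ∫ x in Ioi (0:ℝ), (1 - cos (c*x))/x^2 = c * (π/2) := by
  have h := integral_comp_mul_left_Ioi (fun y : ℝ => (1 - cos y)/y^2) 0 hc
  rw [mul_zero, g_val, smul_eq_mul] at h
  calc ∫ x in Ioi (0:ℝ), (1 - cos (c*x))/x^2
      = ∫ x in Ioi (0:ℝ), c^2 * ((1 - cos (c*x))/(c*x)^2) := by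
        refine setIntegral_congr_fun measurableSet_Ioi (fun x hx => ?_)
        have hx' : (0:ℝ) < x := hx
        field_simp
    _ = c^2 * (c⁻¹ * (π/2)) := by rw [integral_const_mul, h]
    _ = c * (π/2) := by
        field_simp

lemma integral_side : ∫ x in Ioi (0:ℝ), _root_.sinc x * _root_.sinc (x/3) = π/2 := by
  calc ∫ x in Ioi (0:ℝ), _root_.sinc x * _root_.sinc (x/3)
      = ∫ x in Ioi (0:ℝ), (3/2) * ((1 - cos ((4/3)*x))/x^2 - (1 - cos ((2/3)*x))/x^2) := by
        refine setIntegral_congr_fun measurableSet_Ioi (fun x hx => ?_)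
        have hx' : (0:ℝ) < x := hx
        have hcc : cos ((2/3)*x) - cos ((4/3)*x) = 2 * sin x * sin (x/3) := by
          rw [Real.cos_sub_cos]
          rw [show ((2/3)*x + (4/3)*x)/2 = x by ring, show ((2/3)*x - (4/3)*x)/2 = -(x/3) by ring,
            Real.sin_neg]
          ring
        rw [_root_.sinc, _root_.sinc, if_neg hx'.ne', if_neg (by positivity : x/3 ≠ 0)]
        field_simp
        rw [show x*2/3 = (2/3)*x from by ring, show x*4/3 = (4/3)*x from by ring]
        linear_combination (-1) * hcc
    _ = (3/2) * ((4/3) * (π/2) - (2/3) * (π/2)) := by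
        rw [integral_const_mul, integral_sub (gc_int (by norm_num)) (gc_int (by norm_num)),
          gc_val (by norm_num : (0:ℝ) < 4/3), gc_val (by norm_num : (0:ℝ) < 2/3)]
    _ = π/2 := by ring

lemma bern2 (x : ℝ) : (Polynomial.aeval x) (Polynomial.bernoulli 2) = x^2 - x + 1/6 := by
  simp [Polynomial.bernoulli, Finset.sum_range_succ, bernoulli, Polynomial.aeval_monomial]
  ring

lemma cos_series {x : ℝ} (hx : x ∈ Icc (0:ℝ) 1) :
    HasSum (fun n : ℕ => 1 / (n : ℝ) ^ 2 * Real.cos (2 * π * n * x))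
      (π ^ 2 * (x ^ 2 - x + 1/6)) := by
  have h := hasSum_one_div_nat_pow_mul_cos (k := 1) one_ne_zero hx
  norm_num [bern2] at h
  convert h using 2 with n
  · rw [one_div]
  · ring

lemma sum_side : HasSum (fun n : ℕ => _root_.sinc (n + 1) * _root_.sinc ((n + 1) / 3)) ((π - 1)/2) := by
  have hπ : (0:ℝ) < π := pi_pos
  have h3 : (3:ℝ) < π := pi_gt_three
  have hx1 : (1/(3*π)) ∈ Icc (0:ℝ) 1 := by
    constructor
    · positivity
    · rw [div_le_one (by positivity)]; nlinarith
  have hx2 : (2/(3*π)) ∈ Icc (0:ℝ) 1 := by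
    constructor
    · positivity
    · rw [div_le_one (by positivity)]; nlinarith
  have h1 := cos_series hx1
  have h2 := cos_series hx2
  have e1 : ∀ n : ℕ, 2*π*n*(1/(3*π)) = 2*n/3 := fun n => by field_simp
  have e2 : ∀ n : ℕ, 2*π*n*(2/(3*π)) = 4*n/3 := fun n => by field_simp; ring
  simp_rw [e1] at h1
  simp_rw [e2] at h2
  have hs := (h1.sub h2).mul_left (3/2)
  have hval : (3/2) * (π ^ 2 * ((1/(3*π)) ^ 2 - 1/(3*π) + 1/6)
      - π ^ 2 * ((2/(3*π)) ^ 2 - 2/(3*π) + 1/6)) = (π - 1)/2 := by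
    field_simp
    ring
  rw [hval] at hs
  set g : ℕ → ℝ := fun n => 3/2 * (1 / (n:ℝ) ^ 2 * cos (2*n/3) - 1 / (n:ℝ) ^ 2 * cos (4*n/3))
    with hg
  have hshift : HasSum (fun n : ℕ => g (n+1)) ((π - 1)/2) := by
    rw [hasSum_nat_add_iff 1]
    simpa [hg] using hs
  refine hshift.congr_fun fun n => ?_
  have hm : ((n:ℝ)+1) ≠ 0 := by positivity
  have hcc : cos (2*((n:ℝ)+1)/3) - cos (4*((n:ℝ)+1)/3) = 2 * sin ((n:ℝ)+1) * sin (((n:ℝ)+1)/3) := by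
    rw [Real.cos_sub_cos]
    have : (2*((n:ℝ)+1)/3 + 4*((n:ℝ)+1)/3)/2 = (n:ℝ)+1 := by ring
    rw [this]
    have : (2*((n:ℝ)+1)/3 - 4*((n:ℝ)+1)/3)/2 = -(((n:ℝ)+1)/3) := by ring
    rw [this, Real.sin_neg]
    ring
  have h13 : ((n:ℝ)+1)/3 ≠ 0 := by positivity
  simp only [hg, _root_.sinc, Nat.cast_add, Nat.cast_one, push_cast]
  rw [if_neg hm, if_neg h13]
  push_cast
  rw [show (1:ℝ)/((n:ℝ)+1)^2 * cos (2*((n:ℝ)+1)/3) - 1/((n:ℝ)+1)^2 * cos (4*((n:ℝ)+1)/3)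
      = 1/((n:ℝ)+1)^2 * (cos (2*((n:ℝ)+1)/3) - cos (4*((n:ℝ)+1)/3)) by ring, hcc]
  field_simp

end helpers

theorem sinc_sum_eq_integral_N1 :
    1 / 2 + ∑' n : ℕ, _root_.sinc (n + 1) * _root_.sinc ((n + 1) / 3) =
      ∫ x in Set.Ioi (0:ℝ), _root_.sinc x * _root_.sinc (x / 3) := by
  rw [sum_side.tsum_eq, integral_side]
  ring
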